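/- (Energy dissipation for scheme S1.) Let N ≥ 2, Δx > 0, Δt > 0, let H : ℝ → ℝ be convex and differentiable, V ∈ ℝᴺ, and let K ∈ ℝ^{N×N} be given by K_{ik} = w(i−k) for an even function w : ℤ → ℝ. Suppose ρⁿ, ρⁿ⁺¹, ρ** ∈ ℝᴺ satisfy the S1 scheme: ξ_i = H'(ρⁿ⁺¹_i) + V_i + Δx·∑_{k=1}^{N} K_{ik}ρ**_k; u_{i+1/2} = −(ξ_{i+1} − ξ_i)/Δx for i = 1,…,N−1; F_{i+1/2} = ρᴱ_i·u_{i+1/2}⁺ + ρᵂ_{i+1}·u_{i+1/2}⁻ where ρᴱ, ρᵂ are the second-order minmod reconstructions (θ = 2) of ρⁿ; F_{1/2} = F_{N+1/2} = 0; and ρⁿ⁺¹_i = ρⁿ_i − (Δt/Δx)(F_{i+1/2} − F_{i−1/2}) for all i. Assume ρⁿ_i ≥ 0 for all i and the CFL condition 2·Δt·max(u_{i+1/2}⁺, −u_{i+1/2}⁻) ≤ Δx for every i = 1,…,N−1. If one of the following holds: (i) ρ** = (ρⁿ + ρⁿ⁺¹)/2; (ii) ρ** = ρⁿ and K is negative definite;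 (iii) ρ** = ρⁿ⁺¹ and K is positive definite; then E_Δ(ρⁿ⁺¹) ≤ E_Δ(ρⁿ). -/

import Mathlib

/-- The minmod limiter: `min` if all arguments are positive, `max` if all are negative,
and `0` otherwise. -/
noncomputable def minmod3 (a b c : ℝ) : ℝ :=
  if 0 < a ∧ 0 < b ∧ 0 < c then min a (min b c)
  else if a < 0 ∧ b < 0 ∧ c < 0 then max a (max b c)
  else 0

/-- The minmod mslope (θ = 2, mesh `dx`) of a vector `ρ` indexed by `1,…,N`:
interior cells `2 ≤ i ≤ N−1` use the minmod limiter; the first and last cells get `0`. -/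
noncomputable def mslope (N : ℕ) (dx : ℝ) (ρ : ℕ → ℝ) (i : ℕ) : ℝ :=
  if 2 ≤ i ∧ i ≤ N - 1 then
    minmod3 (2 * (ρ (i + 1) - ρ i) / dx)
      ((ρ (i + 1) - ρ (i - 1)) / (2 * dx))
      (2 * (ρ i - ρ (i - 1)) / dx)
  else 0

/-- East reconstruction: `ρᴱ_i = ρ_i + (dx/2)·σ_i`. -/
noncomputable def recE (N : ℕ) (dx : ℝ) (ρ : ℕ → ℝ) (i : ℕ) : ℝ :=
  ρ i + dx / 2 * mslope N dx ρ i

/-- West reconstruction: `ρᵂ_i = ρ_i − (dx/2)·σ_i`. -/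
noncomputable def recW (N : ℕ) (dx : ℝ) (ρ : ℕ → ℝ) (i : ℕ) : ℝ :=
  ρ i - dx / 2 * mslope N dx ρ i

/-- Positive part `z⁺ = max(z,0)`. -/
noncomputable def pospart (z : ℝ) : ℝ := max z 0

/-- Negative part `z⁻ = min(z,0)`. -/
noncomputable def negpart (z : ℝ) : ℝ := min z 0

/-- The discrete free energy
`E_Δ(ρ) = Δx·(∑ H(ρ_i) + ∑ V_i ρ_i + (Δx/2)·∑_{i,k} K_{ik} ρ_i ρ_k)`. -/
noncomputable def Edisc (N : ℕ) (dx : ℝ) (H : ℝ → ℝ) (V : ℕ → ℝ) (K : ℕ → ℕ → ℝ)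
    (ρ : ℕ → ℝ) : ℝ :=
  dx * ((∑ i ∈ Finset.Icc 1 N, H (ρ i)) + (∑ i ∈ Finset.Icc 1 N, V i * ρ i)
    + dx / 2 * ∑ i ∈ Finset.Icc 1 N, ∑ k ∈ Finset.Icc 1 N, K i k * ρ i * ρ k)

/-- The kernel `K` is negative definite: `∑_{i,k} K_{ik}(a_i−b_i)(a_k−b_k) ≤ 0`
for all vectors `a, b` with nonnegative entries. -/
def NegDefKer (N : ℕ) (K : ℕ → ℕ → ℝ) : Prop :=
  ∀ a b : ℕ → ℝ, (∀ i, 1 ≤ i → i ≤ N → 0 ≤ a i) → (∀ i, 1 ≤ i → i ≤ N → 0 ≤ b i) →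
    ∑ i ∈ Finset.Icc 1 N, ∑ k ∈ Finset.Icc 1 N, K i k * (a i - b i) * (a k - b k) ≤ 0

/-- The kernel `K` is positive definite: `∑_{i,k} K_{ik}(a_i−b_i)(a_k−b_k) ≥ 0`
for all vectors `a, b` with nonnegative entries. -/
def PosDefKer (N : ℕ) (K : ℕ → ℕ → ℝ) : Prop :=
  ∀ a b : ℕ → ℝ, (∀ i, 1 ≤ i → i ≤ N → 0 ≤ a i) → (∀ i, 1 ≤ i → i ≤ N → 0 ≤ b i) →
    0 ≤ ∑ i ∈ Finset.Icc 1 N, ∑ k ∈ Finset.Icc 1 N, K i k * (a i - b i) * (a k - b k)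

lemma minmod3_cases (a b c : ℝ) :
    minmod3 a b c = 0 ∨ (0 < minmod3 a b c ∧ minmod3 a b c ≤ a ∧ minmod3 a b c ≤ c)
      ∨ (minmod3 a b c < 0 ∧ a ≤ minmod3 a b c ∧ c ≤ minmod3 a b c) := by
  unfold minmod3
  split_ifs with h1 h2
  · exact Or.inr (Or.inl ⟨lt_min h1.1 (lt_min h1.2.1 h1.2.2), min_le_left _ _,
      (min_le_right _ _).trans (min_le_right _ _)⟩)
  · exact Or.inr (Or.inr ⟨max_lt h2.1 (max_lt h2.2.1 h2.2.2), le_max_left _ _,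
      (le_max_right b c).trans (le_max_right a _)⟩)
  · exact Or.inl rfl

lemma convex_tangent (H : ℝ → ℝ) (hc : ConvexOn ℝ Set.univ H) (hd : Differentiable ℝ H)
    (x y : ℝ) : H x - H y ≤ deriv H x * (x - y) := by
  rcases lt_trichotomy x y with h | h | h
  · have h1 := hc.deriv_le_slope (Set.mem_univ x) (Set.mem_univ y) h (hd x)
    rw [slope_def_field] at h1
    have h2 : deriv H x * (y - x) ≤ H y - H x := by
      rw [← le_div_iff₀ (by linarith)]
      linarith [h1]
    nlinarith [h2]
  · simp [h]
  · have h1 := hc.slope_le_deriv (Set.mem_univ y) (Set.mem_univ x) h (hd x)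
    rw [slope_def_field] at h1
    have h2 : H x - H y ≤ deriv H x * (x - y) := by
      rw [← div_le_iff₀ (by linarith)] at *
      linarith [h1]
    exact h2

lemma rec_nonneg (N : ℕ) (dx : ℝ) (hdx : 0 < dx) (ρ : ℕ → ℝ)
    (hpos : ∀ i, 1 ≤ i → i ≤ N → 0 ≤ ρ i) (i : ℕ) (h1 : 1 ≤ i) (h2 : i ≤ N) :
    0 ≤ recE N dx ρ i ∧ 0 ≤ recW N dx ρ i := by
  unfold recE recW mslope
  split_ifs with h
  · obtain ⟨hi2, hiN⟩ := h
    have h0 := hpos i h1 h2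
    have h0p := hpos (i + 1) (by omega) (by omega)
    have h0m := hpos (i - 1) (by omega) (by omega)
    set a := 2 * (ρ (i + 1) - ρ i) / dx with ha
    set b := (ρ (i + 1) - ρ (i - 1)) / (2 * dx) with hb
    set c := 2 * (ρ i - ρ (i - 1)) / dx with hc
    have hda : dx / 2 * a = ρ (i + 1) - ρ i := by rw [ha]; field_simp
    have hdc : dx / 2 * c = ρ i - ρ (i - 1) := by rw [hc]; field_simp
    rcases minmod3_cases a b c with hσ | ⟨hσ, hσa, hσc⟩ | ⟨hσ, hσa, hσc⟩
    · rw [hσ]; constructor <;> nlinarith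
    · have hle : dx / 2 * minmod3 a b c ≤ dx / 2 * c :=
        mul_le_mul_of_nonneg_left hσc (by linarith)
      constructor
      · nlinarith
      · rw [hdc] at hle; linarith
    · have hge : dx / 2 * a ≤ dx / 2 * minmod3 a b c :=
        mul_le_mul_of_nonneg_left hσa (by linarith)
      constructor
      · rw [hda] at hge; linarith
      · nlinarith
  · have h0 := hpos i h1 h2
    constructor <;> simpa using h0

open Finset in
lemma abel_sum (N : ℕ) (hN : 1 ≤ N) (F ξ : ℕ → ℝ) (h0 : F 0 = 0) (hNz : F N = 0) :
    ∑ i ∈ Icc 1 N, (F i - F (i - 1)) * ξ i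
      = ∑ i ∈ Icc 1 (N - 1), F i * (ξ i - ξ (i + 1)) := by
  obtain ⟨M, rfl⟩ : ∃ M, N = M + 1 := ⟨N - 1, by omega⟩
  have e1 : ∑ i ∈ Icc 1 (M + 1), (F i - F (i - 1)) * ξ i
      = ∑ j ∈ range (M + 1), (F (j + 1) - F j) * ξ (j + 1) := by
    rw [← Finset.Ico_add_one_right_eq_Icc, Finset.sum_Ico_eq_sum_range]
    refine sum_congr rfl fun j _ => ?_
    rw [Nat.add_comm 1 j, show j + 1 - 1 = j from rfl]
  have e2 : ∑ i ∈ Icc 1 (M + 1 - 1), F i * (ξ i - ξ (i + 1))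
      = ∑ j ∈ range M, F (j + 1) * (ξ (j + 1) - ξ (j + 2)) := by
    rw [show M + 1 - 1 = M from rfl, ← Finset.Ico_add_one_right_eq_Icc, Finset.sum_Ico_eq_sum_range,
      show M + 1 - 1 = M from rfl]
    refine sum_congr rfl fun j _ => ?_
    rw [Nat.add_comm 1 j]
  rw [e1, e2]
  have e3 : ∑ j ∈ range (M + 1), (F (j + 1) - F j) * ξ (j + 1)
      = (∑ j ∈ range (M + 1), F (j + 1) * ξ (j + 1))
        - ∑ j ∈ range (M + 1), F j * ξ (j + 1) := by
    rw [← Finset.sum_sub_distrib]; exact sum_congr rfl fun j _ => by ring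
  rw [e3, Finset.sum_range_succ, Finset.sum_range_succ' (fun j => F j * ξ (j + 1)) M,
    hNz, h0]
  simp only [zero_mul, add_zero]
  rw [← Finset.sum_sub_distrib]
  exact sum_congr rfl fun j _ => by rw [show j + 1 + 1 = j + 2 from rfl]; ring

open Finset in
lemma double_sub (N : ℕ) (K : ℕ → ℕ → ℝ) (f g h : ℕ → ℝ) :
    (∑ i ∈ Icc 1 N, ∑ k ∈ Icc 1 N, K i k * f i * h k)
      - ∑ i ∈ Icc 1 N, ∑ k ∈ Icc 1 N, K i k * g i * h k
    = ∑ i ∈ Icc 1 N, ∑ k ∈ Icc 1 N, K i k * (f i - g i) * h k := by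
  rw [← Finset.sum_sub_distrib]
  refine sum_congr rfl fun i _ => ?_
  rw [← Finset.sum_sub_distrib]
  exact sum_congr rfl fun k _ => by ring

open Finset in
lemma double_sub2 (N : ℕ) (K : ℕ → ℕ → ℝ) (f g h : ℕ → ℝ) :
    (∑ i ∈ Icc 1 N, ∑ k ∈ Icc 1 N, K i k * h i * f k)
      - ∑ i ∈ Icc 1 N, ∑ k ∈ Icc 1 N, K i k * h i * g k
    = ∑ i ∈ Icc 1 N, ∑ k ∈ Icc 1 N, K i k * h i * (f k - g k) := by
  rw [← Finset.sum_sub_distrib]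
  refine sum_congr rfl fun i _ => ?_
  rw [← Finset.sum_sub_distrib]
  exact sum_congr rfl fun k _ => by ring

open Finset in
lemma double_comm (N : ℕ) (K : ℕ → ℕ → ℝ) (hsym : ∀ i k, K i k = K k i) (f g : ℕ → ℝ) :
    ∑ i ∈ Icc 1 N, ∑ k ∈ Icc 1 N, K i k * f i * g k
      = ∑ i ∈ Icc 1 N, ∑ k ∈ Icc 1 N, K i k * g i * f k := by
  rw [Finset.sum_comm]
  refine sum_congr rfl fun i _ => sum_congr rfl fun k _ => ?_
  rw [hsym k i]; ring


/-- energy dissipation for the fully discrete scheme S1 under the CFL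
condition, for each of the three admissible choices of the convolution variable `ρ**`. -/
theorem stmt_6 (N : ℕ) (hN : 2 ≤ N) (dx dt : ℝ) (hdx : 0 < dx) (hdt : 0 < dt)
    (H : ℝ → ℝ) (hHconv : ConvexOn ℝ Set.univ H) (hHdiff : Differentiable ℝ H)
    (V : ℕ → ℝ) (w : ℤ → ℝ) (hw : ∀ m : ℤ, w (-m) = w m)
    (K : ℕ → ℕ → ℝ) (hK : ∀ i k : ℕ, K i k = w ((i : ℤ) - (k : ℤ)))
    (ρn ρn1 ρss ξ u F : ℕ → ℝ)
    (hξ : ∀ i, 1 ≤ i → i ≤ N →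
      ξ i = deriv H (ρn1 i) + V i + dx * ∑ k ∈ Finset.Icc 1 N, K i k * ρss k)
    (hu : ∀ i, 1 ≤ i → i ≤ N - 1 → u i = -(ξ (i + 1) - ξ i) / dx)
    (hF : ∀ i, 1 ≤ i → i ≤ N - 1 →
      F i = recE N dx ρn i * pospart (u i) + recW N dx ρn (i + 1) * negpart (u i))
    (hF0 : F 0 = 0) (hFN : F N = 0)
    (hupd : ∀ i, 1 ≤ i → i ≤ N → ρn1 i = ρn i - dt / dx * (F i - F (i - 1)))
    (hpos : ∀ i, 1 ≤ i → i ≤ N → 0 ≤ ρn i)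
    (hCFL : ∀ i, 1 ≤ i → i ≤ N - 1 →
      2 * dt * max (pospart (u i)) (-negpart (u i)) ≤ dx)
    (hcase :
      (∀ i, 1 ≤ i → i ≤ N → ρss i = (ρn i + ρn1 i) / 2) ∨
      ((∀ i, 1 ≤ i → i ≤ N → ρss i = ρn i) ∧ NegDefKer N K) ∨
      ((∀ i, 1 ≤ i → i ≤ N → ρss i = ρn1 i) ∧ PosDefKer N K)) :
    Edisc N dx H V K ρn1 ≤ Edisc N dx H V K ρn := by
  classical
  open Finset in
  have hdx' : dx ≠ 0 := hdx.ne'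
  have hsym : ∀ i k : ℕ, K i k = K k i := by
    intro i k
    rw [hK, hK, show (i : ℤ) - k = -((k : ℤ) - i) by ring, hw]
  have hE : ∀ i, 1 ≤ i → i ≤ N → 0 ≤ recE N dx ρn i :=
    fun i h1 h2 => (rec_nonneg N dx hdx ρn hpos i h1 h2).1
  have hW : ∀ i, 1 ≤ i → i ≤ N → 0 ≤ recW N dx ρn i :=
    fun i h1 h2 => (rec_nonneg N dx hdx ρn hpos i h1 h2).2
  have hEW : ∀ i, recE N dx ρn i + recW N dx ρn i = 2 * ρn i := by
    intro i; unfold recE recW; ring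
  have hup : ∀ i, 0 ≤ pospart (u i) := fun i => le_max_right _ _
  have hun : ∀ i, negpart (u i) ≤ 0 := fun i => min_le_right _ _
  have hcflp : ∀ i, 1 ≤ i → i ≤ N - 1 → 2 * dt * pospart (u i) ≤ dx := by
    intro i h1 h2
    have h3 := hCFL i h1 h2
    have h4 : pospart (u i) ≤ max (pospart (u i)) (-negpart (u i)) := le_max_left _ _
    nlinarith
  have hcfln : ∀ i, 1 ≤ i → i ≤ N - 1 → 2 * dt * (-negpart (u i)) ≤ dx := by
    intro i h1 h2
    have h3 := hCFL i h1 h2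
    have h4 : -negpart (u i) ≤ max (pospart (u i)) (-negpart (u i)) := le_max_right _ _
    nlinarith
  -- positivity of ρn1
  have hpos1 : ∀ i, 1 ≤ i → i ≤ N → 0 ≤ ρn1 i := by
    intro i h1 h2
    have hkey : dx * ρn1 i = dx * ρn i - dt * (F i - F (i - 1)) := by
      rw [hupd i h1 h2]; field_simp
    rw [← mul_nonneg_iff_of_pos_left hdx, hkey]
    have hρd : dx * ρn i * 2 = dx * (recE N dx ρn i + recW N dx ρn i) := by
      rw [hEW i]; ring
    rcases eq_or_lt_of_le h1 with h1' | h1'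
    · -- i = 1
      have hi1 : i = 1 := h1'.symm
      subst hi1
      have hFi : F 1 = recE N dx ρn 1 * pospart (u 1) + recW N dx ρn 2 * negpart (u 1) :=
        hF 1 le_rfl (by omega)
      rw [hFi, show (1 : ℕ) - 1 = 0 from rfl, hF0]
      have t1 : 0 ≤ recE N dx ρn 1 * (dx - 2 * dt * pospart (u 1)) :=
        mul_nonneg (hE 1 (by omega) (by omega)) (by linarith [hcflp 1 (by omega) (by omega)])
      have t2 : 0 ≤ recW N dx ρn 1 * dx := mul_nonneg (hW 1 (by omega) (by omega)) hdx.le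
      have t3 : 0 ≤ recW N dx ρn 2 * (-(dt * negpart (u 1))) :=
        mul_nonneg (hW 2 (by omega) (by omega)) (by nlinarith [hun 1])
      nlinarith [t1, t2, t3, hρd]
    · -- 2 ≤ i
      have h2i : 2 ≤ i := h1'
      rcases eq_or_lt_of_le h2 with h2' | h2'
      · -- i = N
        have hFNi : F i = 0 := by rw [h2', hFN]
        have hFm : F (i - 1) = recE N dx ρn (i - 1) * pospart (u (i - 1))
            + recW N dx ρn (i - 1 + 1) * negpart (u (i - 1)) :=
          hF (i - 1) (by omega) (by omega)
        rw [show i - 1 + 1 = i by omega] at hFm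
        rw [hFNi, hFm]
        have t2 : 0 ≤ recW N dx ρn i * (dx + 2 * dt * negpart (u (i - 1))) :=
          mul_nonneg (hW i (by omega) (by omega))
            (by linarith [hcfln (i - 1) (by omega) (by omega)])
        have t1 : 0 ≤ recE N dx ρn i * dx := mul_nonneg (hE i (by omega) (by omega)) hdx.le
        have t4 : 0 ≤ recE N dx ρn (i - 1) * (dt * pospart (u (i - 1))) :=
          mul_nonneg (hE (i - 1) (by omega) (by omega)) (by nlinarith [hup (i - 1)])
        nlinarith [t1, t2, t4, hρd]
      · -- i ≤ N - 1
        have h2N : i ≤ N - 1 := by omega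
        have hFi : F i = recE N dx ρn i * pospart (u i) + recW N dx ρn (i + 1) * negpart (u i) :=
          hF i (by omega) h2N
        have hFm : F (i - 1) = recE N dx ρn (i - 1) * pospart (u (i - 1))
            + recW N dx ρn (i - 1 + 1) * negpart (u (i - 1)) :=
          hF (i - 1) (by omega) (by omega)
        rw [show i - 1 + 1 = i by omega] at hFm
        rw [hFi, hFm]
        have t1 : 0 ≤ recE N dx ρn i * (dx - 2 * dt * pospart (u i)) :=
          mul_nonneg (hE i (by omega) (by omega)) (by linarith [hcflp i (by omega) h2N])
        have t2 : 0 ≤ recW N dx ρn i * (dx + 2 * dt * negpart (u (i - 1))) :=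
          mul_nonneg (hW i (by omega) (by omega))
            (by linarith [hcfln (i - 1) (by omega) (by omega)])
        have t3 : 0 ≤ recW N dx ρn (i + 1) * (-(dt * negpart (u i))) :=
          mul_nonneg (hW (i + 1) (by omega) (by omega)) (by nlinarith [hun i])
        have t4 : 0 ≤ recE N dx ρn (i - 1) * (dt * pospart (u (i - 1))) :=
          mul_nonneg (hE (i - 1) (by omega) (by omega)) (by nlinarith [hup (i - 1)])
        nlinarith [t1, t2, t3, t4, hρd]
  -- flux positivity
  have hFu : ∀ i, 1 ≤ i → i ≤ N - 1 → 0 ≤ F i * u i := by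
    intro i h1 h2
    have hpn : pospart (u i) + negpart (u i) = u i := by
      unfold pospart negpart
      rcases le_total 0 (u i) with h | h
      · rw [max_eq_left h, min_eq_right h]; ring
      · rw [max_eq_right h, min_eq_left h]; ring
    have hpz : pospart (u i) * negpart (u i) = 0 := by
      unfold pospart negpart
      rcases le_total 0 (u i) with h | h
      · rw [min_eq_right h]; ring
      · rw [max_eq_right h]; ring
    have hkey : F i * u i = recE N dx ρn i * pospart (u i) ^ 2
        + recW N dx ρn (i + 1) * negpart (u i) ^ 2 := by
      rw [hF i h1 h2]
      linear_combination
        (-(recE N dx ρn i * pospart (u i) + recW N dx ρn (i + 1) * negpart (u i))) * hpn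
          + (recE N dx ρn i + recW N dx ρn (i + 1)) * hpz
    rw [hkey]
    have e1 := hE i h1 (by omega)
    have e2 := hW (i + 1) (by omega) (by omega)
    positivity
  -- flux inequality
  have hflux : ∑ i ∈ Finset.Icc 1 N, (ρn1 i - ρn i) * ξ i ≤ 0 := by
    have h1 : ∀ i ∈ Finset.Icc 1 N, (ρn1 i - ρn i) * ξ i
        = -(dt / dx) * ((F i - F (i - 1)) * ξ i) := by
      intro i hi
      obtain ⟨hi1, hi2⟩ := Finset.mem_Icc.mp hi
      rw [hupd i hi1 hi2]; ring
    rw [Finset.sum_congr rfl h1, ← Finset.mul_sum,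
      abel_sum N (by omega) F ξ hF0 hFN]
    have h2 : ∀ i ∈ Finset.Icc 1 (N - 1), F i * (ξ i - ξ (i + 1)) = dx * (F i * u i) := by
      intro i hi
      obtain ⟨hi1, hi2⟩ := Finset.mem_Icc.mp hi
      have : ξ i - ξ (i + 1) = dx * u i := by
        rw [hu i hi1 hi2]; field_simp; ring
      rw [this]; ring
    rw [Finset.sum_congr rfl h2]
    have h3 : 0 ≤ ∑ i ∈ Finset.Icc 1 (N - 1), dx * (F i * u i) :=
      Finset.sum_nonneg fun i hi => by
        obtain ⟨hi1, hi2⟩ := Finset.mem_Icc.mp hi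
        exact mul_nonneg hdx.le (hFu i hi1 hi2)
    have h4 : 0 ≤ dt / dx := by positivity
    nlinarith [mul_nonneg h4 h3]
  -- quadratic identity
  have hQ : (∑ i ∈ Finset.Icc 1 N, ∑ k ∈ Finset.Icc 1 N, K i k * ρn1 i * ρn1 k)
      - (∑ i ∈ Finset.Icc 1 N, ∑ k ∈ Finset.Icc 1 N, K i k * ρn i * ρn k)
      = (∑ i ∈ Finset.Icc 1 N, ∑ k ∈ Finset.Icc 1 N, K i k * (ρn1 i - ρn i) * ρn1 k)
        + ∑ i ∈ Finset.Icc 1 N, ∑ k ∈ Finset.Icc 1 N, K i k * (ρn1 i - ρn i) * ρn k := by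
    have e1 := double_sub N K ρn1 ρn ρn1
    have e2 := double_sub N K ρn1 ρn ρn
    have e3 := double_comm N K hsym ρn ρn1
    linarith
  have hsplit : (∑ i ∈ Finset.Icc 1 N, ∑ k ∈ Finset.Icc 1 N, K i k * (ρn1 i - ρn i) * ρn1 k)
      = (∑ i ∈ Finset.Icc 1 N, ∑ k ∈ Finset.Icc 1 N, K i k * (ρn1 i - ρn i) * ρn k)
        + ∑ i ∈ Finset.Icc 1 N, ∑ k ∈ Finset.Icc 1 N,
            K i k * (ρn1 i - ρn i) * (ρn1 k - ρn k) := by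
    rw [← Finset.sum_add_distrib]
    refine Finset.sum_congr rfl fun i _ => ?_
    rw [← Finset.sum_add_distrib]
    exact Finset.sum_congr rfl fun k _ => by ring
  -- case analysis: Q1 - Q0 ≤ 2 * SDss
  have hQle : (∑ i ∈ Finset.Icc 1 N, ∑ k ∈ Finset.Icc 1 N, K i k * ρn1 i * ρn1 k)
      - (∑ i ∈ Finset.Icc 1 N, ∑ k ∈ Finset.Icc 1 N, K i k * ρn i * ρn k)
      ≤ 2 * ∑ i ∈ Finset.Icc 1 N, ∑ k ∈ Finset.Icc 1 N, K i k * (ρn1 i - ρn i) * ρss k := by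
    rcases hcase with hρ | ⟨hρ, hneg⟩ | ⟨hρ, hposK⟩
    · -- ρss = (ρn + ρn1)/2
      have e : (∑ i ∈ Finset.Icc 1 N, ∑ k ∈ Finset.Icc 1 N, K i k * (ρn1 i - ρn i) * ρn1 k)
          + (∑ i ∈ Finset.Icc 1 N, ∑ k ∈ Finset.Icc 1 N, K i k * (ρn1 i - ρn i) * ρn k)
          = 2 * ∑ i ∈ Finset.Icc 1 N, ∑ k ∈ Finset.Icc 1 N,
              K i k * (ρn1 i - ρn i) * ρss k := by
        rw [Finset.mul_sum, ← Finset.sum_add_distrib]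
        refine Finset.sum_congr rfl fun i _ => ?_
        rw [Finset.mul_sum, ← Finset.sum_add_distrib]
        refine Finset.sum_congr rfl fun k hk => ?_
        obtain ⟨hk1, hk2⟩ := Finset.mem_Icc.mp hk
        rw [hρ k hk1 hk2]; ring
      linarith [hQ]
    · -- ρss = ρn, K negative definite
      have hDD := hneg ρn1 ρn hpos1 hpos
      have e : (∑ i ∈ Finset.Icc 1 N, ∑ k ∈ Finset.Icc 1 N, K i k * (ρn1 i - ρn i) * ρn k)
          = ∑ i ∈ Finset.Icc 1 N, ∑ k ∈ Finset.Icc 1 N, K i k * (ρn1 i - ρn i) * ρss k := by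
        refine Finset.sum_congr rfl fun i _ => Finset.sum_congr rfl fun k hk => ?_
        obtain ⟨hk1, hk2⟩ := Finset.mem_Icc.mp hk
        rw [hρ k hk1 hk2]
      linarith [hQ, hsplit]
    · -- ρss = ρn1, K positive definite
      have hDD := hposK ρn1 ρn hpos1 hpos
      have e : (∑ i ∈ Finset.Icc 1 N, ∑ k ∈ Finset.Icc 1 N, K i k * (ρn1 i - ρn i) * ρn1 k)
          = ∑ i ∈ Finset.Icc 1 N, ∑ k ∈ Finset.Icc 1 N, K i k * (ρn1 i - ρn i) * ρss k := by
        refine Finset.sum_congr rfl fun i _ => Finset.sum_congr rfl fun k hk => ?_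
        obtain ⟨hk1, hk2⟩ := Finset.mem_Icc.mp hk
        rw [hρ k hk1 hk2]
      linarith [hQ, hsplit]
  -- convexity bound
  have hH : (∑ i ∈ Finset.Icc 1 N, H (ρn1 i)) - ∑ i ∈ Finset.Icc 1 N, H (ρn i)
      ≤ ∑ i ∈ Finset.Icc 1 N, deriv H (ρn1 i) * (ρn1 i - ρn i) := by
    rw [← Finset.sum_sub_distrib]
    exact Finset.sum_le_sum fun i _ => convex_tangent H hHconv hHdiff _ _
  -- sum expansion of ξ
  have hξsum : ∑ i ∈ Finset.Icc 1 N, (ρn1 i - ρn i) * ξ i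
      = (∑ i ∈ Finset.Icc 1 N, deriv H (ρn1 i) * (ρn1 i - ρn i))
        + (∑ i ∈ Finset.Icc 1 N, (V i * ρn1 i - V i * ρn i))
        + dx * ∑ i ∈ Finset.Icc 1 N, ∑ k ∈ Finset.Icc 1 N,
            K i k * (ρn1 i - ρn i) * ρss k := by
    rw [Finset.mul_sum, ← Finset.sum_add_distrib, ← Finset.sum_add_distrib]
    refine Finset.sum_congr rfl fun i hi => ?_
    obtain ⟨hi1, hi2⟩ := Finset.mem_Icc.mp hi
    have e : (ρn1 i - ρn i) * (dx * ∑ k ∈ Finset.Icc 1 N, K i k * ρss k)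
        = dx * ∑ k ∈ Finset.Icc 1 N, K i k * (ρn1 i - ρn i) * ρss k := by
      simp only [Finset.mul_sum]
      exact Finset.sum_congr rfl fun k _ => by ring
    rw [hξ i hi1 hi2]
    linear_combination e
  have hVd : (∑ i ∈ Finset.Icc 1 N, V i * ρn1 i) - ∑ i ∈ Finset.Icc 1 N, V i * ρn i
      = ∑ i ∈ Finset.Icc 1 N, (V i * ρn1 i - V i * ρn i) :=
    (Finset.sum_sub_distrib _ _).symm
  have inner_le : ((∑ i ∈ Finset.Icc 1 N, H (ρn1 i)) - ∑ i ∈ Finset.Icc 1 N, H (ρn i))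
      + ((∑ i ∈ Finset.Icc 1 N, V i * ρn1 i) - ∑ i ∈ Finset.Icc 1 N, V i * ρn i)
      + dx / 2 * ((∑ i ∈ Finset.Icc 1 N, ∑ k ∈ Finset.Icc 1 N, K i k * ρn1 i * ρn1 k)
        - ∑ i ∈ Finset.Icc 1 N, ∑ k ∈ Finset.Icc 1 N, K i k * ρn i * ρn k)
      ≤ ∑ i ∈ Finset.Icc 1 N, (ρn1 i - ρn i) * ξ i := by
    rw [hξsum]
    have k2 : dx / 2 * ((∑ i ∈ Finset.Icc 1 N, ∑ k ∈ Finset.Icc 1 N, K i k * ρn1 i * ρn1 k)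
        - ∑ i ∈ Finset.Icc 1 N, ∑ k ∈ Finset.Icc 1 N, K i k * ρn i * ρn k)
        ≤ dx * ∑ i ∈ Finset.Icc 1 N, ∑ k ∈ Finset.Icc 1 N, K i k * (ρn1 i - ρn i) * ρss k := by
      have := mul_le_mul_of_nonneg_left hQle (by linarith : (0:ℝ) ≤ dx / 2)
      linarith
    linarith [hH, hVd]
  have final : dx * ∑ i ∈ Finset.Icc 1 N, (ρn1 i - ρn i) * ξ i ≤ 0 := by
    nlinarith [mul_nonneg hdx.le (neg_nonneg.mpr hflux)]
  have expand : Edisc N dx H V K ρn1 - Edisc N dx H V K ρn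
      = dx * (((∑ i ∈ Finset.Icc 1 N, H (ρn1 i)) - ∑ i ∈ Finset.Icc 1 N, H (ρn i))
        + ((∑ i ∈ Finset.Icc 1 N, V i * ρn1 i) - ∑ i ∈ Finset.Icc 1 N, V i * ρn i)
        + dx / 2 * ((∑ i ∈ Finset.Icc 1 N, ∑ k ∈ Finset.Icc 1 N, K i k * ρn1 i * ρn1 k)
          - ∑ i ∈ Finset.Icc 1 N, ∑ k ∈ Finset.Icc 1 N, K i k * ρn i * ρn k)) := by
    unfold Edisc; ring
  have step := mul_le_mul_of_nonneg_left inner_le hdx.le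
  linarith [expand, step, final]
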